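/- Let X ⊆ ℤ/nℤ be a finite nonempty set with |X + X| ≤ σ|X| and |X| ≥ dim_F(X). Then dim_F(X) + 1 ≤ 2σ, where dim_F(X) is the Freĭman dimension of X. -/

import Mathlib

open Classical Pointwise

instance instFinWFLT (N : ℕ) : WellFoundedLT (Fin N) := Finite.to_wellFoundedLT

noncomputable instance instLexRealPi (N : ℕ) : IsOrderedCancelAddMonoid (Lex (Fin N → ℝ)) :=
  inferInstance

noncomputable instance instLexRealPiLO (N : ℕ) : LinearOrder (Lex (Fin N → ℝ)) :=
  inferInstance

private lemma exists_lex_max {N : ℕ} (A : Finset (Fin N → ℝ)) (hA : A.Nonempty) :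
    ∃ v ∈ A, ∀ a ∈ A, a ≠ v → toLex a < toLex v := by
  obtain ⟨v, hv, hmax⟩ := A.exists_max_image toLex hA
  exact ⟨v, hv, fun a ha hne =>
    lt_of_le_of_ne (hmax a ha) (fun h => hne (toLex.injective h))⟩

/-- Freiman's lemma in `ℝ^N`. -/
private lemma freiman_core {N : ℕ} (A : Finset (Fin N → ℝ)) (hA : A.Nonempty) :
    2 * A.card * (Module.finrank ℝ (vectorSpan ℝ (A : Set (Fin N → ℝ))) + 1)
      ≤ 2 * (A + A).card
        + Module.finrank ℝ (vectorSpan ℝ (A : Set (Fin N → ℝ)))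
          * (Module.finrank ℝ (vectorSpan ℝ (A : Set (Fin N → ℝ))) + 1) := by
  classical
  revert hA
  induction A using Finset.strongInduction with
  | _ A ih =>
  intro hA
  obtain ⟨v, hv, hmax⟩ := exists_lex_max A hA
  set A' := A.erase v with hA'def
  have hA'sub : A' ⊆ A := Finset.erase_subset _ _
  set k := Module.finrank ℝ (vectorSpan ℝ (A : Set (Fin N → ℝ))) with hkdef
  rcases Finset.eq_empty_or_nonempty A' with hA' | hA'
  · -- A = {v}
    have hAv : A = {v} := by
      apply Finset.eq_singleton_iff_unique_mem.2
      refine ⟨hv, fun a ha => ?_⟩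
      by_contra hne
      exact Finset.notMem_empty a (hA' ▸ Finset.mem_erase.2 ⟨hne, ha⟩)
    have hk0 : k = 0 := by
      rw [hkdef, hAv, Finset.coe_singleton, vectorSpan_singleton]
      exact finrank_bot ℝ (Fin N → ℝ)
    rw [hk0, hAv]
    simp
  -- A' nonempty
  have hss : A' ⊂ A := Finset.erase_ssubset hv
  have IH0 := ih A' hss hA'
  set k' := Module.finrank ℝ (vectorSpan ℝ (A' : Set (Fin N → ℝ))) with hk'def
  have hW'W : vectorSpan ℝ (A' : Set (Fin N → ℝ)) ≤ vectorSpan ℝ (A : Set (Fin N → ℝ)) :=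
    vectorSpan_mono ℝ (by exact_mod_cast hA'sub)
  have hk'k : k' ≤ k := Submodule.finrank_mono hW'W
  have hcoeA' : (A' : Set (Fin N → ℝ)) = (A : Set (Fin N → ℝ)) \ {v} := Finset.coe_erase v A
  have hWM : vectorSpan ℝ (A : Set (Fin N → ℝ))
      = Submodule.span ℝ ((· -ᵥ v) '' (A' : Set (Fin N → ℝ))) := by
    rw [vectorSpan_eq_span_vsub_set_right_ne ℝ (Finset.mem_coe.2 hv), hcoeA']
  have hmAcard : A.card = A'.card + 1 := by
    have hpos : 0 < A.card := Finset.card_pos.2 hA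
    have h' : A'.card = A.card - 1 := by rw [hA'def, Finset.card_erase_of_mem hv]
    omega
  -- lex facts
  have hlt : ∀ x ∈ A', toLex x < toLex v := fun x hx =>
    hmax x (hA'sub hx) (Finset.ne_of_mem_erase hx)
  have h2v : ∀ x ∈ A', ∀ y ∈ A', ¬ (x + y = v + v) := by
    intro x hx y hy hxy
    have h1 : toLex x + toLex y < toLex v + toLex v := add_lt_add (hlt x hx) (hlt y hy)
    rw [← toLex_add, ← toLex_add, hxy] at h1
    exact lt_irrefl _ h1
  rcases eq_or_lt_of_le hk'k with hkk | hkk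
  · -- case k' = k
    set U : (Fin N → ℝ) → Finset (Fin N → ℝ) := fun a => A'.filter (fun x => toLex a < toLex x) with hUdef
    set T : Finset (Fin N → ℝ) := A'.filter (fun a =>
      (a -ᵥ v) ∉ Submodule.span ℝ (((U a).image (· -ᵥ v) : Finset (Fin N → ℝ)) : Set (Fin N → ℝ))) with hTdef
    have hTsub : T ⊆ A' := Finset.filter_subset _ _
    -- Claim A: span of A' - v is spanned by T - v
    have key : ∀ m : ℕ, ∀ a ∈ A', (U a).card ≤ m →
        a -ᵥ v ∈ Submodule.span ℝ ((· -ᵥ v) '' (T : Set (Fin N → ℝ))) := by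
      intro m
      induction m with
      | zero =>
        intro a ha hcard
        by_cases haT : a ∈ T
        · exact Submodule.subset_span ⟨a, Finset.mem_coe.2 haT, rfl⟩
        · have hP : (a -ᵥ v) ∈ Submodule.span ℝ
              (((U a).image (· -ᵥ v) : Finset (Fin N → ℝ)) : Set (Fin N → ℝ)) := by
            by_contra hnP
            exact haT (Finset.mem_filter.2 ⟨ha, hnP⟩)
          have hUe : U a = ∅ := Finset.card_eq_zero.1 (Nat.le_zero.1 hcard)
          rw [hUe] at hP
          simp only [Finset.image_empty, Finset.coe_empty, Submodule.span_empty,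
            Submodule.mem_bot] at hP
          rw [hP]
          exact Submodule.zero_mem _
      | succ m IHm =>
        intro a ha hcard
        by_cases haT : a ∈ T
        · exact Submodule.subset_span ⟨a, Finset.mem_coe.2 haT, rfl⟩
        · have hP : (a -ᵥ v) ∈ Submodule.span ℝ
              (((U a).image (· -ᵥ v) : Finset (Fin N → ℝ)) : Set (Fin N → ℝ)) := by
            by_contra hnP
            exact haT (Finset.mem_filter.2 ⟨ha, hnP⟩)
          refine Submodule.span_le.2 ?_ hP
          rw [Finset.coe_image]
          rintro _ ⟨x, hx, rfl⟩
          have hx' := Finset.mem_coe.1 hx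
          have hxA' : x ∈ A' := (Finset.mem_filter.1 hx').1
          have hax : toLex a < toLex x := (Finset.mem_filter.1 hx').2
          have hUsub : U x ⊆ U a := by
            intro y hy
            have hy' := Finset.mem_filter.1 hy
            exact Finset.mem_filter.2 ⟨hy'.1, lt_trans hax hy'.2⟩
          have hxnot : x ∉ U x := by
            intro hc
            exact lt_irrefl _ (Finset.mem_filter.1 hc).2
          have hlt2 : (U x).card < (U a).card :=
            Finset.card_lt_card ⟨hUsub, fun hc => hxnot (hc hx')⟩
          exact IHm x hxA' (by omega)
    have hspan : Submodule.span ℝ ((· -ᵥ v) '' (A' : Set (Fin N → ℝ)))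
        ≤ Submodule.span ℝ ((· -ᵥ v) '' (T : Set (Fin N → ℝ))) := by
      rw [Submodule.span_le]
      rintro _ ⟨a, ha, rfl⟩
      exact key (U a).card a (Finset.mem_coe.1 ha) le_rfl
    have hTcard : k ≤ T.card := by
      have h1 : vectorSpan ℝ (A : Set (Fin N → ℝ)) ≤ Submodule.span ℝ
          (((T.image (· -ᵥ v)) : Finset (Fin N → ℝ)) : Set (Fin N → ℝ)) := by
        rw [hWM, Finset.coe_image]
        exact hspan
      calc k ≤ Module.finrank ℝ (Submodule.span ℝ
            (((T.image (· -ᵥ v)) : Finset (Fin N → ℝ)) : Set (Fin N → ℝ))) := Submodule.finrank_mono h1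
        _ ≤ (T.image (· -ᵥ v)).card := finrank_span_finset_le_card _
        _ ≤ T.card := Finset.card_image_le
    -- new sums
    have hdisj : ∀ a ∈ insert v T, v + a ∉ A' + A' := by
      intro a hmem hbad
      obtain ⟨x, hx, y, hy, hxy⟩ := Finset.mem_add.1 hbad
      rcases Finset.mem_insert.1 hmem with rfl | haT
      · exact h2v x hx y hy hxy
      · have haA' : a ∈ A' := hTsub haT
        have htax : toLex a < toLex x := by
          have h1 : toLex x + toLex y = toLex v + toLex a := by
            rw [← toLex_add, ← toLex_add, hxy]
          have h2 : toLex x + toLex y < toLex x + toLex v :=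
            add_lt_add_right (hlt y hy) _
          have h3 : toLex v + toLex a < toLex v + toLex x := by
            rw [← h1]; rw [add_comm (toLex x) (toLex v)] at h2; exact h2
          exact lt_of_add_lt_add_left h3
        have htay : toLex a < toLex y := by
          have h1 : toLex y + toLex x = toLex v + toLex a := by
            rw [← toLex_add, ← toLex_add, add_comm y x, hxy]
          have h2 : toLex y + toLex x < toLex y + toLex v :=
            add_lt_add_right (hlt x hx) _
          have h3 : toLex v + toLex a < toLex v + toLex y := by
            rw [← h1]; rw [add_comm (toLex y) (toLex v)] at h2; exact h2
          exact lt_of_add_lt_add_left h3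
        have hxU : x ∈ U a := Finset.mem_filter.2 ⟨hx, htax⟩
        have hyU : y ∈ U a := Finset.mem_filter.2 ⟨hy, htay⟩
        have hmemspan : a -ᵥ v ∈ Submodule.span ℝ
            (((U a).image (· -ᵥ v) : Finset (Fin N → ℝ)) : Set (Fin N → ℝ)) := by
          have hval : a -ᵥ v = (x -ᵥ v) + (y -ᵥ v) := by
            simp only [vsub_eq_sub]
            have : x + y = v + a := hxy
            linear_combination -this
          rw [hval]
          exact Submodule.add_mem _
            (Submodule.subset_span (by
              rw [Finset.coe_image]; exact ⟨x, Finset.mem_coe.2 hxU, rfl⟩))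
            (Submodule.subset_span (by
              rw [Finset.coe_image]; exact ⟨y, Finset.mem_coe.2 hyU, rfl⟩))
        exact (Finset.mem_filter.1 haT).2 hmemspan
    set N1 : Finset (Fin N → ℝ) := (insert v T).image (v + ·) with hN1def
    have hvnotT : v ∉ T := fun hc => Finset.ne_of_mem_erase (hTsub hc) rfl
    have hN1card : N1.card = T.card + 1 := by
      rw [hN1def, Finset.card_image_of_injective _ (add_right_injective v),
        Finset.card_insert_of_notMem hvnotT]
    have hN1sub : N1 ⊆ A + A := by
      intro b hb
      obtain ⟨a, ha, rfl⟩ := Finset.mem_image.1 hb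
      rcases Finset.mem_insert.1 ha with rfl | haT
      · exact Finset.add_mem_add hv hv
      · exact Finset.add_mem_add hv (hA'sub (hTsub haT))
    have hdisjF : Disjoint N1 (A' + A') := by
      rw [Finset.disjoint_left]
      intro b hb hb2
      obtain ⟨a, ha, rfl⟩ := Finset.mem_image.1 hb
      exact hdisj a ha hb2
    have hsub2 : A' + A' ⊆ A + A := Finset.add_subset_add hA'sub hA'sub
    have hcards : (A' + A').card + (T.card + 1) ≤ (A + A).card := by
      rw [← hN1card]
      calc (A' + A').card + N1.card = ((A' + A') ∪ N1).card := by
            rw [Finset.card_union_of_disjoint hdisjF.symm]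
        _ ≤ (A + A).card := Finset.card_le_card (Finset.union_subset hsub2 hN1sub)
    -- arithmetic
    rw [← hkk]
    have hIH : 2 * A'.card * (k' + 1) ≤ 2 * (A' + A').card + k' * (k' + 1) := IH0
    have hkT : k' ≤ T.card := hkk ▸ hTcard
    calc 2 * A.card * (k' + 1) = 2 * A'.card * (k' + 1) + 2 * (k' + 1) := by
          rw [hmAcard]; ring
      _ ≤ (2 * (A' + A').card + k' * (k' + 1)) + 2 * (k' + 1) :=
          Nat.add_le_add_right hIH _
      _ = 2 * ((A' + A').card + (k' + 1)) + k' * (k' + 1) := by ring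
      _ ≤ 2 * ((A' + A').card + (T.card + 1)) + k' * (k' + 1) := by
          have : (A' + A').card + (k' + 1) ≤ (A' + A').card + (T.card + 1) := by omega
          exact Nat.add_le_add_right (Nat.mul_le_mul_left 2 this) _
      _ ≤ 2 * (A + A).card + k' * (k' + 1) :=
          Nat.add_le_add_right (Nat.mul_le_mul_left 2 hcards) _
  · -- case k' < k
    have hkle : k ≤ k' + 1 := by
      obtain ⟨a₀, ha₀⟩ := hA'
      have h1 : vectorSpan ℝ (A : Set (Fin N → ℝ))
          ≤ vectorSpan ℝ (A' : Set (Fin N → ℝ)) ⊔ Submodule.span ℝ {a₀ -ᵥ v} := by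
        rw [hWM, Submodule.span_le]
        rintro _ ⟨x, hx, rfl⟩
        show x -ᵥ v ∈ _
        have hxa : x -ᵥ v = (x -ᵥ a₀) + (a₀ -ᵥ v) := by
          simp only [vsub_eq_sub]; ring
        rw [hxa]
        exact Submodule.add_mem _
          (Submodule.mem_sup_left (vsub_mem_vectorSpan ℝ hx (Finset.mem_coe.2 ha₀)))
          (Submodule.mem_sup_right (Submodule.mem_span_singleton_self _))
      calc k ≤ Module.finrank ℝ
            (vectorSpan ℝ (A' : Set (Fin N → ℝ)) ⊔ Submodule.span ℝ {a₀ -ᵥ v} : Submodule ℝ (Fin N → ℝ)) :=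
            Submodule.finrank_mono h1
        _ ≤ k' + Module.finrank ℝ (Submodule.span ℝ ({a₀ -ᵥ v} : Set (Fin N → ℝ))) :=
            Submodule.finrank_add_le_finrank_add_finrank _ _
        _ ≤ k' + 1 := by
            have h2 : Module.finrank ℝ (Submodule.span ℝ ({a₀ -ᵥ v} : Set (Fin N → ℝ))) ≤ 1 := by
              rcases eq_or_ne (a₀ -ᵥ v) 0 with h0 | h0
              · rw [h0, Submodule.span_zero_singleton]
                simp [finrank_bot]
              · rw [finrank_span_singleton h0]
            omega
    have hkeq : k = k' + 1 := le_antisymm hkle hkk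
    have hdisj2 : ∀ a ∈ A, v + a ∉ A' + A' := by
      intro a ha hbad
      obtain ⟨x, hx, y, hy, hxy⟩ := Finset.mem_add.1 hbad
      by_cases hav : a = v
      · exact h2v x hx y hy (hav ▸ hxy)
      · have haA' : a ∈ A' := Finset.mem_erase.2 ⟨hav, ha⟩
        have hvx : v -ᵥ x ∈ vectorSpan ℝ (A' : Set (Fin N → ℝ)) := by
          have hval : v -ᵥ x = y -ᵥ a := by
            simp only [vsub_eq_sub]
            have : x + y = v + a := hxy
            linear_combination -this
          rw [hval]
          exact vsub_mem_vectorSpan ℝ (Finset.mem_coe.2 hy) (Finset.mem_coe.2 haA')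
        have hWle : vectorSpan ℝ (A : Set (Fin N → ℝ)) ≤ vectorSpan ℝ (A' : Set (Fin N → ℝ)) := by
          rw [vectorSpan_eq_span_vsub_set_right ℝ (Finset.mem_coe.2 (hA'sub hx)),
            Submodule.span_le]
          rintro _ ⟨b, hb, rfl⟩
          by_cases hbv : b = v
          · rw [hbv]; exact hvx
          · exact vsub_mem_vectorSpan ℝ
              (Finset.mem_coe.2 (Finset.mem_erase.2 ⟨hbv, Finset.mem_coe.1 hb⟩))
              (Finset.mem_coe.2 hx)
        have : k ≤ k' := Submodule.finrank_mono hWle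
        omega
    set N2 : Finset (Fin N → ℝ) := A.image (v + ·) with hN2def
    have hN2card : N2.card = A.card :=
      Finset.card_image_of_injective _ (add_right_injective v)
    have hN2sub : N2 ⊆ A + A := by
      intro b hb
      obtain ⟨a, ha, rfl⟩ := Finset.mem_image.1 hb
      exact Finset.add_mem_add hv ha
    have hdisjF : Disjoint N2 (A' + A') := by
      rw [Finset.disjoint_left]
      intro b hb hb2
      obtain ⟨a, ha, rfl⟩ := Finset.mem_image.1 hb
      exact hdisj2 a ha hb2
    have hsub2 : A' + A' ⊆ A + A := Finset.add_subset_add hA'sub hA'sub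
    have hcards : (A' + A').card + A.card ≤ (A + A).card := by
      rw [← hN2card]
      calc (A' + A').card + N2.card = ((A' + A') ∪ N2).card := by
            rw [Finset.card_union_of_disjoint hdisjF.symm]
        _ ≤ (A + A).card := Finset.card_le_card (Finset.union_subset hsub2 hN2sub)
    have hIH : 2 * A'.card * (k' + 1) ≤ 2 * (A' + A').card + k' * (k' + 1) := IH0
    rw [hkeq]
    calc 2 * A.card * (k' + 1 + 1)
        = 2 * A'.card * (k' + 1) + (2 * A'.card + 2 * (k' + 1) + 2) := by
          rw [hmAcard]; ring
      _ ≤ (2 * (A' + A').card + k' * (k' + 1)) + (2 * A'.card + 2 * (k' + 1) + 2) :=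
          Nat.add_le_add_right hIH _
      _ = 2 * ((A' + A').card + (A'.card + 1)) + (k' * (k' + 1) + 2 * (k' + 1)) := by ring
      _ = 2 * ((A' + A').card + A.card) + (k' + 1) * (k' + 1 + 1) := by
          rw [hmAcard]; ring
      _ ≤ 2 * (A + A).card + (k' + 1) * (k' + 1 + 1) :=
          Nat.add_le_add_right (Nat.mul_le_mul_left 2 hcards) _


private lemma card_sumset_eq_of_iso {G H : Type*} [AddCommGroup G] [AddCommGroup H]
    [DecidableEq G] [DecidableEq H]
    (X : Finset G) (Y : Finset H) (φ : G → H)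
    (hφ : IsAddFreimanIso 2 (X : Set G) (Y : Set H) φ) :
    (X + X).card = (Y + Y).card := by
  have key : ∀ s ∈ X + X, ∃ a ∈ X, ∃ b ∈ X, a + b = s := fun s hs => Finset.mem_add.1 hs
  choose f hf g hg hfg using key
  apply Finset.card_bij (fun s hs => φ (f s hs) + φ (g s hs))
  · intro s hs
    exact Finset.add_mem_add
      (Finset.mem_coe.1 (hφ.bijOn.mapsTo (Finset.mem_coe.2 (hf s hs))))
      (Finset.mem_coe.1 (hφ.bijOn.mapsTo (Finset.mem_coe.2 (hg s hs))))
  · intro s hs t ht h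
    have h2 : f s hs + g s hs = f t ht + g t ht :=
      (hφ.add_eq_add (hf s hs) (hg s hs) (hf t ht) (hg t ht)).1 h
    rw [← hfg s hs, ← hfg t ht, h2]
  · intro t ht
    obtain ⟨y₁, hy₁, y₂, hy₂, hyy⟩ := Finset.mem_add.1 ht
    obtain ⟨a, ha, hay⟩ := hφ.bijOn.surjOn (Finset.mem_coe.2 hy₁)
    obtain ⟨b, hb, hby⟩ := hφ.bijOn.surjOn (Finset.mem_coe.2 hy₂)
    have haX : a ∈ X := Finset.mem_coe.1 ha
    have hbX : b ∈ X := Finset.mem_coe.1 hb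
    have habs : a + b ∈ X + X := Finset.add_mem_add haX hbX
    refine ⟨a + b, habs, ?_⟩
    have h3 : f (a+b) habs + g (a+b) habs = a + b := hfg _ _
    have h4 : φ (f (a+b) habs) + φ (g (a+b) habs) = φ a + φ b :=
      (hφ.add_eq_add (hf _ _) (hg _ _) haX hbX).2 h3
    rw [h4, hay, hby, hyy]

private lemma card_eq_of_iso {G H : Type*} [AddCommGroup G] [AddCommGroup H]
    [DecidableEq G] [DecidableEq H]
    (X : Finset G) (Y : Finset H) (φ : G → H)
    (hφ : IsAddFreimanIso 2 (X : Set G) (Y : Set H) φ) :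
    X.card = Y.card := by
  have himg : X.image φ = Y := by
    apply Finset.coe_injective
    rw [Finset.coe_image]
    exact hφ.bijOn.image_eq
  rw [← himg, Finset.card_image_of_injOn hφ.bijOn.injOn]

/-- The Freĭman dimension of a finite set `X` in an abelian group: the largest `d`
such that some full-rank finite subset of `ℤ^d` is Freĭman isomorphic (of order 2)
to `X`. -/
noncomputable def freimanDim {G : Type*} [AddCommGroup G] (X : Finset G) : ℕ :=
  sSup {d : ℕ | ∃ (Y : Finset (Fin d → ℤ)) (φ : G → (Fin d → ℤ)),
    IsAddFreimanIso 2 (X : Set G) (Y : Set (Fin d → ℤ)) φ ∧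
    Module.finrank ℝ
      (affineSpan ℝ ((fun (y : Fin d → ℤ) (i : Fin d) => (y i : ℝ)) ''
        (Y : Set (Fin d → ℤ)))).direction = d}

private lemma elem_bound {n : ℕ} (X : Finset (ZMod n)) (d : ℕ)
    (hd : ∃ (Y : Finset (Fin d → ℤ)) (φ : ZMod n → (Fin d → ℤ)),
      IsAddFreimanIso 2 (X : Set (ZMod n)) (Y : Set (Fin d → ℤ)) φ ∧
      Module.finrank ℝ
        (affineSpan ℝ ((fun (y : Fin d → ℤ) (i : Fin d) => (y i : ℝ)) ''
          (Y : Set (Fin d → ℤ)))).direction = d)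
    (hX : X.Nonempty) :
    d + 1 ≤ X.card ∧ 2 * X.card * (d + 1) ≤ 2 * (X + X).card + d * (d + 1) := by
  classical
  obtain ⟨Y, φ, hiso, hrank⟩ := hd
  set c : (Fin d → ℤ) →+ (Fin d → ℝ) := (Int.castAddHom ℝ).compLeft (Fin d) with hcdef
  have hcinj : Function.Injective c := fun y z h =>
    funext fun i => Int.cast_injective (congrFun h i)
  set B : Finset (Fin d → ℝ) := Y.image c with hBdef
  have hBset : ((fun (y : Fin d → ℤ) (i : Fin d) => (y i : ℝ)) '' (Y : Set (Fin d → ℤ)))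
      = (B : Set (Fin d → ℝ)) := by
    rw [hBdef, Finset.coe_image]
    rfl
  rw [hBset, direction_affineSpan] at hrank
  have hXY := card_eq_of_iso X Y φ hiso
  have hXXYY := card_sumset_eq_of_iso X Y φ hiso
  have hBcard : B.card = X.card := by
    rw [hBdef, Finset.card_image_of_injective _ hcinj, hXY]
  have hBB : (B + B).card = (X + X).card := by
    have himg : (Y + Y).image c = B + B := by
      rw [hBdef]; exact Finset.image_add c
    rw [← himg, Finset.card_image_of_injective _ hcinj, hXXYY]
  have hBne : B.Nonempty := by
    rw [← Finset.card_pos, hBcard, Finset.card_pos]; exact hX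
  have hb1 : d + 1 ≤ X.card := by
    have hc : B.card = (B.card - 1) + 1 := by
      have := Finset.card_pos.2 hBne; omega
    have hb := finrank_vectorSpan_image_finset_le (k := ℝ) id B hc
    rw [Finset.image_id, hrank] at hb
    have := Finset.card_pos.2 hBne
    omega
  refine ⟨hb1, ?_⟩
  have hcore := freiman_core B hBne
  rw [hrank, hBcard, hBB] at hcore
  exact hcore

/-- If `X ⊆ ℤ/nℤ` is nonempty with `|X + X| ≤ σ|X|` and `|X| ≥ dim_F(X)`,
then `dim_F(X) + 1 ≤ 2σ`. -/
theorem freiman_dim_le_doubling (n : ℕ) (hn : n.Prime) (X : Finset (ZMod n))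
    (hX : X.Nonempty) (σ : ℝ)
    (hσ : ((X + X).card : ℝ) ≤ σ * X.card)
    (hdim : freimanDim X ≤ X.card) :
    (freimanDim X : ℝ) + 1 ≤ 2 * σ := by
  classical
  have hx0 : (0:ℝ) < X.card := by exact_mod_cast Finset.card_pos.2 hX
  have hXX : X.card ≤ (X + X).card := Finset.card_le_card_add_right hX
  have hσ1 : (1:ℝ) ≤ σ := by
    have h1 : (X.card : ℝ) ≤ ((X + X).card : ℝ) := by exact_mod_cast hXX
    nlinarith
  set S := {d : ℕ | ∃ (Y : Finset (Fin d → ℤ)) (φ : ZMod n → (Fin d → ℤ)),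
      IsAddFreimanIso 2 (X : Set (ZMod n)) (Y : Set (Fin d → ℤ)) φ ∧
      Module.finrank ℝ
        (affineSpan ℝ ((fun (y : Fin d → ℤ) (i : Fin d) => (y i : ℝ)) ''
          (Y : Set (Fin d → ℤ)))).direction = d} with hSdef
  have hDdef : freimanDim X = sSup S := rfl
  have helem : ∀ d ∈ S, d + 1 ≤ X.card ∧
      2 * X.card * (d + 1) ≤ 2 * (X + X).card + d * (d + 1) := by
    intro d hd
    rw [hSdef, Set.mem_setOf_eq] at hd
    exact elem_bound X d hd hX
  by_cases hS : S.Nonempty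
  · have hbdd : BddAbove S := by
      refine ⟨X.card, fun d hd => ?_⟩
      have := (helem d hd).1
      omega
    have hmem : freimanDim X ∈ S := by
      rw [hDdef]
      exact Nat.sSup_mem hS hbdd
    obtain ⟨h1, h2⟩ := helem (freimanDim X) hmem
    set D := freimanDim X with hD
    have h2' : 2 * (X.card : ℝ) * ((D : ℝ) + 1)
        ≤ 2 * ((X + X).card : ℝ) + (D : ℝ) * ((D : ℝ) + 1) := by exact_mod_cast h2
    have hDm : (D : ℝ) ≤ (X.card : ℝ) := by exact_mod_cast hdim
    have h3 : (D : ℝ) * ((D : ℝ) + 1) ≤ (X.card : ℝ) * ((D : ℝ) + 1) :=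
      mul_le_mul_of_nonneg_right hDm (by positivity)
    have h4 : (X.card : ℝ) * ((D : ℝ) + 1) ≤ 2 * σ * (X.card : ℝ) := by nlinarith
    nlinarith
  · rw [hDdef, Set.not_nonempty_iff_eq_empty.1 hS, csSup_empty, Nat.bot_eq_zero]

    push_cast
    linarith
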